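/- Let (A, •, ⟨ , ⟩) be a quadratic left Leibniz algebra (⟨ , ⟩ nondegenerate symmetric and invariant: ⟨u•v, w⟩ = ⟨u, v•w⟩). Then the Levi-Civita products are given by u⋆v = v∘u = (1/2) u•v for all u,v ∈ A. -/
import Mathlib


/-- For a quadratic left Leibniz algebra the Levi-Civita products are given by
u⋆v = v∘u = (1/2) u•v. -/
theorem quadratic_leviCivita_half
    {K A : Type*} [Field K] [AddCommGroup A] [Module K A]
    (htwo : (2 : K) ≠ 0)
    (mul starP circP : A →ₗ[K] A →ₗ[K] A)
    (B : A →ₗ[K] A →ₗ[K] K)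
    (hLL : ∀ u v w : A, mul u (mul v w) = mul (mul u v) w + mul v (mul u w))
    (hsymm : ∀ u v : A, B u v = B v u)
    (hnd : ∀ v : A, (∀ u : A, B u v = 0) → v = 0)
    (hinv : ∀ u v w : A, B (mul u v) w = B u (mul v w))
    (htor : ∀ u v : A, mul u v = starP u v + circP v u)
    (hcomp : ∀ u v w : A, B (starP u v) w = B v (circP u w)) :
    ∀ u v : A,
      starP u v = (2 : K)⁻¹ • mul u v ∧ circP v u = (2 : K)⁻¹ • mul u v := by
  have hcirc : ∀ a c : A, circP a c = mul c a - starP c a := by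
    intro a c
    rw [htor c a]; abel
  have e1 : ∀ a b c : A, B (starP a b) c = B b (mul c a) - B b (starP c a) := by
    intro a b c
    rw [hcomp, hcirc, map_sub]
  intro u v
  have hstar : starP u v = (2 : K)⁻¹ • mul u v := by
    have h0 : (2 : K) • starP u v - mul u v = 0 := by
      apply hnd
      intro w
      have s1 : B (starP u v) w = B (mul u v) w - B (starP w u) v := by
        rw [e1 u v w, hsymm v (mul w u), hinv w u v, hsymm w (mul u v),
          hsymm v (starP w u)]
      have s2 : B (starP w u) v = B (mul u v) w - B (starP v w) u := by
        rw [e1 w u v, ← hinv u v w, hsymm u (starP v w)]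
      have s3 : B (starP v w) u = B (mul u v) w - B (starP u v) w := by
        rw [e1 v w u, hsymm w (mul u v), hsymm w (starP u v)]
      have key : (2 : K) * B (starP u v) w = B (mul u v) w := by
        linear_combination s1 + s3 - s2
      have : B w ((2 : K) • starP u v - mul u v) =
          (2 : K) * B (starP u v) w - B (mul u v) w := by
        rw [map_sub, map_smul, smul_eq_mul, hsymm w (starP u v),
          hsymm w (mul u v)]
      rw [this, key, sub_self]
    have h1 : (2 : K) • starP u v = mul u v := by
      rw [← sub_eq_zero]; exact h0
    calc starP u v = (2 : K)⁻¹ • ((2 : K) • starP u v) := by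
          rw [smul_smul, inv_mul_cancel₀ htwo, one_smul]
      _ = (2 : K)⁻¹ • mul u v := by rw [h1]
  refine ⟨hstar, ?_⟩
  have hhalf : (2 : K)⁻¹ + (2 : K)⁻¹ = 1 := by
    field_simp
    norm_num
  rw [hcirc v u, hstar]
  calc mul u v - (2 : K)⁻¹ • mul u v
      = ((2 : K)⁻¹ + (2 : K)⁻¹) • mul u v - (2 : K)⁻¹ • mul u v := by
        rw [hhalf, one_smul]
    _ = (2 : K)⁻¹ • mul u v := by rw [add_smul]; abel
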